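/- For any real ν > 0 and real exponents γ₂, γ₃ ≥ 0, γ₁ ≥ γ₃ with γ₁ ≤ γ₂+γ₃+1, the quantity sup_{x ≥ 0} (1+x²) e^{−νx} x^{−γ₁} ∫₀^x (e^{νh}/(1+h²)) (x−h)^{γ₂} h^{γ₃} dh is finite. -/

import Mathlib

open MeasureTheory Real Filter

lemma aux_rpow_exp_bound (c γ : ℝ) (hc : 0 < c) (hγ : 0 ≤ γ) :
    ∃ C : ℝ, 0 ≤ C ∧ ∀ t : ℝ, 0 ≤ t → t ^ γ * Real.exp (-c * t) ≤ C := by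
  have h := tendsto_rpow_mul_exp_neg_mul_atTop_nhds_zero γ c hc
  have h2 : ∀ᶠ t : ℝ in atTop, t ^ γ * Real.exp (-c * t) ≤ 1 := by
    filter_upwards [h.eventually (eventually_le_nhds (by norm_num : (0:ℝ) < 1))] with t ht
    exact ht
  obtain ⟨T, hT⟩ := h2.exists_forall_of_atTop
  set T' := max T 0 with hT'
  refine ⟨max 1 (T' ^ γ), le_max_of_le_left zero_le_one, fun t ht => ?_⟩
  rcases le_total t T' with h' | h'
  · calc t ^ γ * Real.exp (-c * t) ≤ t ^ γ * 1 := by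
          apply mul_le_mul_of_nonneg_left _ (Real.rpow_nonneg ht γ)
          exact Real.exp_le_one_iff.2 (by nlinarith)
    _ = t ^ γ := mul_one _
    _ ≤ T' ^ γ := Real.rpow_le_rpow ht h' hγ
    _ ≤ _ := le_max_right _ _
  · exact le_trans (hT t (le_trans (le_max_left _ _) h')) (le_max_left _ _)

lemma aux_exp_integral (c x : ℝ) (hc : 0 < c) (hx : 0 ≤ x) :
    ∫ h in Set.Ioo (0:ℝ) x, Real.exp (c * (h - x)) ≤ c⁻¹ := by
  rw [← MeasureTheory.integral_Ioc_eq_integral_Ioo, ← intervalIntegral.integral_of_le hx]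
  have : ∫ h in (0:ℝ)..x, Real.exp (c * (h - x))
      = c⁻¹ * Real.exp (c * (x - x)) - c⁻¹ * Real.exp (c * (0 - x)) := by
    apply intervalIntegral.integral_eq_sub_of_hasDerivAt (f := fun h => c⁻¹ * Real.exp (c * (h - x)))
    · intro y _
      have : HasDerivAt (fun h : ℝ => c * (h - x)) c y := by
        simpa using ((hasDerivAt_id y).sub_const x).const_mul c
      have := (this.exp).const_mul c⁻¹
      exact this.congr_deriv (by rw [mul_comm (Real.exp _) c, ← mul_assoc, inv_mul_cancel₀ hc.ne', one_mul])
    · exact (Real.continuous_exp.comp (by continuity)).intervalIntegrable _ _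
  rw [this]
  have h1 : Real.exp (c * (x - x)) = 1 := by simp
  have h2 : 0 < Real.exp (c * (0 - x)) := Real.exp_pos _
  nlinarith [inv_pos.2 hc]

set_option maxHeartbeats 1000000 in
/-- The scalar kernel estimate: for `ν > 0` and exponents `γ₂, γ₃ ≥ 0`,
`γ₃ ≤ γ₁ ≤ γ₂ + γ₃ + 1`, the quantity
`(1+x²) e^{-νx} x^{-γ₁} ∫₀^x e^{νh}/(1+h²) (x-h)^{γ₂} h^{γ₃} dh`
is bounded uniformly in `x ≥ 0`. -/
theorem stmt_16 (ν γ₁ γ₂ γ₃ : ℝ) (hν : 0 < ν) (hγ₂ : 0 ≤ γ₂) (hγ₃ : 0 ≤ γ₃)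
    (h2 : γ₃ ≤ γ₁) (h1 : γ₁ ≤ γ₂ + γ₃ + 1) :
    ∃ M : ℝ, ∀ x : ℝ, 0 ≤ x →
      (1 + x ^ 2) * Real.exp (-ν * x) * x ^ (-γ₁) *
          ∫ h in Set.Ioo (0 : ℝ) x,
            Real.exp (ν * h) / (1 + h ^ 2) * (x - h) ^ γ₂ * h ^ γ₃
        ≤ M := by
  obtain ⟨C₁, hC₁0, hC₁⟩ := aux_rpow_exp_bound (ν/2) γ₂ (by linarith) hγ₂
  obtain ⟨C₂, hC₂0, hC₂⟩ := aux_rpow_exp_bound (ν/8) 2 (by linarith) (by norm_num)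
  refine ⟨max 2 (Real.exp ν * C₁ * (4/ν) * (5 + C₂)), fun x hx => ?_⟩
  rcases eq_or_lt_of_le hx with rfl | hx0
  · simp only [Set.Ioo_self, Measure.restrict_empty, integral_zero_measure, mul_zero]
    exact le_max_of_le_left (by norm_num)
  -- notation
  set P : ℝ := (1 + x ^ 2) * Real.exp (-ν * x) * x ^ (-γ₁) with hP
  have hPnn : 0 ≤ P := by
    have := Real.rpow_nonneg hx (-γ₁)
    positivity
  have h1x2 : (0:ℝ) < 1 + x ^ 2 := by positivity
  rcases le_total x 1 with hx1 | hx1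
  · -- small x: crude bound
    refine le_trans ?_ (le_max_left _ _)
    have hIle : (∫ h in Set.Ioo (0 : ℝ) x,
          Real.exp (ν * h) / (1 + h ^ 2) * (x - h) ^ γ₂ * h ^ γ₃)
        ≤ ∫ _h in Set.Ioo (0 : ℝ) x, Real.exp (ν * x) * x ^ γ₂ * x ^ γ₃ := by
      apply integral_mono_of_nonneg
      · rw [Filter.EventuallyLE, ae_restrict_iff' measurableSet_Ioo]
        refine ae_of_all _ fun h hh => ?_
        obtain ⟨hh1, hh2⟩ := hh
        have : (0:ℝ) ≤ x - h := by linarith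
        positivity
      · exact (integrableOn_const (measure_Ioo_lt_top.ne))
      · rw [Filter.EventuallyLE, ae_restrict_iff' measurableSet_Ioo]
        refine ae_of_all _ fun h hh => ?_
        obtain ⟨hh1, hh2⟩ := hh
        have hxh : (0:ℝ) ≤ x - h := by linarith
        have e1 : Real.exp (ν * h) / (1 + h ^ 2) ≤ Real.exp (ν * x) := by
          rw [div_le_iff₀ (by positivity)]
          have : Real.exp (ν * h) ≤ Real.exp (ν * x) :=
            Real.exp_le_exp.2 (by nlinarith)
          nlinarith [Real.exp_pos (ν * h)]
        have e2 : (x - h) ^ γ₂ ≤ x ^ γ₂ := Real.rpow_le_rpow hxh (by linarith) hγ₂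
        have e3 : h ^ γ₃ ≤ x ^ γ₃ := Real.rpow_le_rpow hh1.le hh2.le hγ₃
        have n1 := Real.rpow_nonneg hxh γ₂
        have n2 := Real.rpow_nonneg hh1.le γ₃
        have n3 := Real.rpow_nonneg hx γ₂
        exact mul_le_mul (mul_le_mul e1 e2 n1 (Real.exp_pos _).le) e3 n2 (by positivity)
    have hconst : (∫ _h in Set.Ioo (0 : ℝ) x, Real.exp (ν * x) * x ^ γ₂ * x ^ γ₃)
        = x * (Real.exp (ν * x) * x ^ γ₂ * x ^ γ₃) := by
      rw [setIntegral_const, Real.volume_real_Ioo_of_le hx, smul_eq_mul]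
      ring_nf
    calc P * ∫ h in Set.Ioo (0 : ℝ) x,
            Real.exp (ν * h) / (1 + h ^ 2) * (x - h) ^ γ₂ * h ^ γ₃
        ≤ P * (x * (Real.exp (ν * x) * x ^ γ₂ * x ^ γ₃)) := by
          rw [← hconst]; exact mul_le_mul_of_nonneg_left hIle hPnn
      _ = (1 + x ^ 2) * (x ^ (-γ₁) * x ^ γ₂ * x ^ γ₃ * x ^ (1:ℝ)) := by
          have hme : Real.exp (-ν*x) * Real.exp (ν*x) = 1 := by
            rw [← Real.exp_add, neg_mul, neg_add_cancel, Real.exp_zero]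
          rw [hP, Real.rpow_one]
          linear_combination ((1+x^2) * x^(-γ₁) * x^γ₂ * x^γ₃ * x) * hme
      _ = (1 + x ^ 2) * x ^ (γ₂ + γ₃ + 1 - γ₁) := by
          rw [← Real.rpow_add hx0, ← Real.rpow_add hx0, ← Real.rpow_add hx0]
          ring_nf
      _ ≤ 2 * 1 := by
          apply mul_le_mul (by nlinarith) (Real.rpow_le_one hx hx1 (by linarith))
            (Real.rpow_nonneg hx _) (by norm_num)
      _ = 2 := by norm_num
  · -- large x
    refine le_trans ?_ (le_max_right _ _)
    set E : ℝ := 4 / (1 + x ^ 2) + Real.exp (-(ν/8) * x) with hE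
    have hE0 : 0 ≤ E := by positivity
    set B : ℝ := Real.exp (ν * x) * C₁ * (x ^ γ₃ * E) with hB
    have hB0 : 0 ≤ B := by positivity
    have hIle : (∫ h in Set.Ioo (0 : ℝ) x,
          Real.exp (ν * h) / (1 + h ^ 2) * (x - h) ^ γ₂ * h ^ γ₃)
        ≤ ∫ h in Set.Ioo (0 : ℝ) x, B * Real.exp ((ν/4) * (h - x)) := by
      apply integral_mono_of_nonneg
      · rw [Filter.EventuallyLE, ae_restrict_iff' measurableSet_Ioo]
        refine ae_of_all _ fun h hh => ?_
        obtain ⟨hh1, hh2⟩ := hh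
        have : (0:ℝ) ≤ x - h := by linarith
        positivity
      · exact ((continuous_const.mul (Real.continuous_exp.comp (by continuity))
          : Continuous fun h : ℝ => B * Real.exp ((ν/4) * (h - x)))).integrableOn_Icc.mono_set
          Set.Ioo_subset_Icc_self
      · rw [Filter.EventuallyLE, ae_restrict_iff' measurableSet_Ioo]
        refine ae_of_all _ fun h hh => ?_
        obtain ⟨hh1, hh2⟩ := hh
        have hxh : (0:ℝ) < x - h := by linarith
        set t : ℝ := x - h with ht
        -- rewrite exp (ν h) = exp(ν x) * exp(-ν t)
        have hexp : Real.exp (ν * h) = Real.exp (ν * x) * Real.exp (-ν * t) := by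
          rw [← Real.exp_add]; ring_nf; rw [ht]; ring_nf
        -- Step A: exp(-ν t) * t^γ₂ ≤ C₁ * exp(-(ν/2) t)
        have stepA : t ^ γ₂ * Real.exp (-ν * t) ≤ C₁ * Real.exp (-(ν/2) * t) := by
          have : Real.exp (-ν * t) = Real.exp (-(ν/2) * t) * Real.exp (-(ν/2) * t) := by
            rw [← Real.exp_add]; ring_nf
          rw [this, ← mul_assoc]
          exact mul_le_mul_of_nonneg_right (hC₁ t hxh.le) (Real.exp_pos _).le
        -- Step B: exp(-(ν/2) t) * h^γ₃ / (1+h²) ≤ x^γ₃ * E * exp(-(ν/4) t)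
        have stepB : Real.exp (-(ν/2) * t) * (h ^ γ₃ / (1 + h ^ 2))
            ≤ x ^ γ₃ * E * Real.exp (-(ν/4) * t) := by
          have hhγ : h ^ γ₃ ≤ x ^ γ₃ := Real.rpow_le_rpow hh1.le hh2.le hγ₃
          have hhγ0 : 0 ≤ h ^ γ₃ := Real.rpow_nonneg hh1.le γ₃
          have hxγ0 : 0 ≤ x ^ γ₃ := Real.rpow_nonneg hx γ₃
          rcases le_total (x/2) h with hc | hc
          · -- h ≥ x/2 : use 1/(1+h²) ≤ 4/(1+x²)
            have hfrac : h ^ γ₃ / (1 + h ^ 2) ≤ x ^ γ₃ * (4 / (1 + x ^ 2)) := by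
              rw [show x ^ γ₃ * (4 / (1 + x ^ 2)) = (x ^ γ₃ * 4) / (1 + x ^ 2) by ring,
                div_le_div_iff₀ (by positivity) h1x2]
              have h4 : (1 + x ^ 2) ≤ 4 * (1 + h ^ 2) := by
                nlinarith [mul_self_le_mul_self hx (show x ≤ 2*h by linarith)]
              nlinarith [mul_le_mul hhγ h4 (by positivity : (0:ℝ) ≤ 1 + x ^ 2) hxγ0]
            have hexp2 : Real.exp (-(ν/2) * t) ≤ Real.exp (-(ν/4) * t) :=
              Real.exp_le_exp.2 (by nlinarith)
            calc Real.exp (-(ν/2) * t) * (h ^ γ₃ / (1 + h ^ 2))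
                ≤ Real.exp (-(ν/4) * t) * (x ^ γ₃ * (4 / (1 + x ^ 2))) := by
                  apply mul_le_mul hexp2 hfrac (by positivity) (Real.exp_pos _).le
              _ ≤ x ^ γ₃ * E * Real.exp (-(ν/4) * t) := by
                  rw [hE, mul_add]
                  have : 0 ≤ x ^ γ₃ * Real.exp (-(ν/8) * x) := by positivity
                  nlinarith [Real.exp_pos (-(ν/4) * t)]
          · -- h ≤ x/2 : t ≥ x/2, gain exp(-ν x/8)
            have htx : x / 2 ≤ t := by simp only [ht]; linarith
            have hexp2 : Real.exp (-(ν/2) * t)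
                ≤ Real.exp (-(ν/8) * x) * Real.exp (-(ν/4) * t) := by
              rw [← Real.exp_add]
              apply Real.exp_le_exp.2
              nlinarith
            have hfrac : h ^ γ₃ / (1 + h ^ 2) ≤ x ^ γ₃ := by
              rw [div_le_iff₀ (by positivity)]
              nlinarith
            calc Real.exp (-(ν/2) * t) * (h ^ γ₃ / (1 + h ^ 2))
                ≤ (Real.exp (-(ν/8) * x) * Real.exp (-(ν/4) * t)) * x ^ γ₃ := by
                  apply mul_le_mul hexp2 hfrac (by positivity) (by positivity)
              _ = x ^ γ₃ * Real.exp (-(ν/8) * x) * Real.exp (-(ν/4) * t) := by ring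
              _ ≤ x ^ γ₃ * E * Real.exp (-(ν/4) * t) := by
                  apply mul_le_mul_of_nonneg_right _ (Real.exp_pos _).le
                  apply mul_le_mul_of_nonneg_left _ hxγ0
                  rw [hE]
                  have : (0:ℝ) ≤ 4 / (1 + x ^ 2) := by positivity
                  linarith
        -- combine
        have key : Real.exp (ν * h) / (1 + h ^ 2) * (x - h) ^ γ₂ * h ^ γ₃
            = Real.exp (ν * x) * ((t ^ γ₂ * Real.exp (-ν * t)) * (h ^ γ₃ / (1 + h ^ 2))) := by
          rw [hexp]; field_simp; ring
        rw [key]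
        have hg : B * Real.exp ((ν/4) * (h - x))
            = Real.exp (ν * x) * (C₁ * (x ^ γ₃ * E * Real.exp (-(ν/4) * t))) := by
          rw [hB]
          have : Real.exp ((ν/4) * (h - x)) = Real.exp (-(ν/4) * t) := by
            congr 1; simp only [ht]; ring
          rw [this]; ring
        rw [hg]
        apply mul_le_mul_of_nonneg_left _ (Real.exp_pos _).le
        calc (t ^ γ₂ * Real.exp (-ν * t)) * (h ^ γ₃ / (1 + h ^ 2))
            ≤ (C₁ * Real.exp (-(ν/2) * t)) * (h ^ γ₃ / (1 + h ^ 2)) := by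
              apply mul_le_mul_of_nonneg_right stepA (by positivity)
          _ = C₁ * (Real.exp (-(ν/2) * t) * (h ^ γ₃ / (1 + h ^ 2))) := by ring
          _ ≤ C₁ * (x ^ γ₃ * E * Real.exp (-(ν/4) * t)) := by
              apply mul_le_mul_of_nonneg_left stepB hC₁0
    have hint : (∫ h in Set.Ioo (0 : ℝ) x, B * Real.exp ((ν/4) * (h - x)))
        ≤ B * (4/ν) := by
      rw [integral_const_mul]
      have := aux_exp_integral (ν/4) x (by linarith) hx
      have h4ν : ((ν:ℝ)/4)⁻¹ = 4/ν := by field_simp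
      rw [h4ν] at this
      exact mul_le_mul_of_nonneg_left this hB0
    -- final arithmetic
    calc P * ∫ h in Set.Ioo (0 : ℝ) x,
            Real.exp (ν * h) / (1 + h ^ 2) * (x - h) ^ γ₂ * h ^ γ₃
        ≤ P * (B * (4/ν)) :=
          mul_le_mul_of_nonneg_left (le_trans hIle hint) hPnn
      _ = C₁ * (4/ν) * (x ^ (-γ₁) * x ^ γ₃) * ((1 + x ^ 2) * E) := by
          have hme : Real.exp (-ν*x) * Real.exp (ν*x) = 1 := by
            rw [← Real.exp_add, neg_mul, neg_add_cancel, Real.exp_zero]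
          rw [hP, hB]
          linear_combination (C₁ * (4/ν) * (x ^ (-γ₁) * x ^ γ₃) * ((1 + x ^ 2) * E)) * hme
      _ = C₁ * (4/ν) * x ^ (γ₃ - γ₁) * ((1 + x ^ 2) * E) := by
          rw [← Real.rpow_add hx0]; ring_nf
      _ ≤ C₁ * (4/ν) * 1 * (5 + C₂) := by
          apply mul_le_mul
          · apply mul_le_mul_of_nonneg_left _ (by positivity)
            exact Real.rpow_le_one_of_one_le_of_nonpos hx1 (by linarith)
          · -- (1+x²) E ≤ 5 + C₂
            rw [hE, mul_add]
            have e1 : (1 + x ^ 2) * (4 / (1 + x ^ 2)) = 4 := by field_simp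
            have e2 : (1 + x ^ 2) * Real.exp (-(ν/8) * x) ≤ 1 + C₂ := by
              have hc2 := hC₂ x hx
              rw [Real.rpow_two] at hc2
              have : Real.exp (-(ν/8) * x) ≤ 1 := Real.exp_le_one_iff.2 (by nlinarith)
              nlinarith [Real.exp_pos (-(ν/8) * x), sq_nonneg x]
            rw [e1]; linarith
          · positivity
          · positivity
      _ ≤ Real.exp ν * C₁ * (4/ν) * (5 + C₂) := by
          have : (1:ℝ) ≤ Real.exp ν := by
            nlinarith [Real.add_one_le_exp ν]
          nlinarith [mul_nonneg (mul_nonneg hC₁0 (by positivity : (0:ℝ) ≤ 4/ν))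
            (by linarith : (0:ℝ) ≤ 5 + C₂)]
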